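/- Let k be a Mercer kernel on 𝕋 = [0,∞) with RKHS H. Then H is contained in L¹([0,∞)) (i.e. every g ∈ H satisfies ∫_{[0,∞)} |g(t)| dt < ∞) if and only if for every essentially bounded measurable function u : [0,∞) → ℝ one has ∫_{[0,∞)} | ∫_{[0,∞)} u(s) k(t,s) ds | dt < ∞. -/

import Mathlib

open scoped InnerProductSpace ENNReal
open MeasureTheory Set Filter

private lemma aux_sign_meas : Measurable Real.sign := by
  have h : Real.sign = fun r : ℝ => if r < 0 then (-1 : ℝ) else if 0 < r then 1 else 0 := by
    funext r; rfl
  rw [h]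
  exact Measurable.ite (measurableSet_lt measurable_id measurable_const) measurable_const
    (Measurable.ite (measurableSet_lt measurable_const measurable_id) measurable_const
      measurable_const)

private lemma aux_sign_mul (x : ℝ) : Real.sign x * x = |x| := by
  rcases lt_trichotomy x 0 with h | h | h
  · rw [Real.sign_of_neg h, abs_of_neg h]; ring
  · simp [h]
  · rw [Real.sign_of_pos h, abs_of_pos h]; ring

private lemma aux_sign_le (x : ℝ) : |Real.sign x| ≤ 1 := by
  rcases lt_trichotomy x 0 with h | h | h
  · simp [Real.sign_of_neg h]
  · simp [h, Real.sign_zero]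
  · simp [Real.sign_of_pos h]

private lemma aux_bound {α : Type*} [MeasurableSpace α] {ν : Measure α} {u : α → ℝ}
    (hu : MemLp u ⊤ ν) : ∃ M : ℝ, 0 ≤ M ∧ ∀ᵐ x ∂ν, |u x| ≤ M := by
  refine ⟨(eLpNormEssSup u ν).toReal, ENNReal.toReal_nonneg, ?_⟩
  have h1 : eLpNormEssSup u ν ≠ ⊤ := by
    have := hu.2
    rw [eLpNorm_exponent_top] at this
    exact this.ne
  filter_upwards [ae_le_eLpNormEssSup (f := u) (μ := ν)] with x hx
  have h2 := ENNReal.toReal_mono h1 hx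
  simpa [Real.norm_eq_abs] using h2

theorem stmt_1
    {H : Type*} [NormedAddCommGroup H] [InnerProductSpace ℝ H] [CompleteSpace H]
    (k : ℝ → ℝ → ℝ)
    (hcont : ContinuousOn (fun p : ℝ × ℝ => k p.1 p.2) (Ici 0 ×ˢ Ici 0))
    (hsymm : ∀ s ∈ Ici (0:ℝ), ∀ t ∈ Ici (0:ℝ), k s t = k t s)
    (hpsd : ∀ (n : ℕ) (t : Fin n → ℝ), (∀ i, 0 ≤ t i) →
      ∀ a : Fin n → ℝ, 0 ≤ ∑ i, ∑ j, a i * a j * k (t i) (t j))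
    (ι : H →ₗ[ℝ] (ℝ → ℝ))
    (hι : ∀ g₁ g₂ : H, (∀ t ∈ Ici (0:ℝ), ι g₁ t = ι g₂ t) → g₁ = g₂)
    (K : ℝ → H) (hK : ∀ t ∈ Ici (0:ℝ), ∀ s ∈ Ici (0:ℝ), ι (K t) s = k t s)
    (hrep : ∀ g : H, ∀ t ∈ Ici (0:ℝ), ⟪g, K t⟫_ℝ = ι g t) :
    (∀ g : H, IntegrableOn (ι g) (Ici 0)) ↔
      (∀ u : ℝ → ℝ, MemLp u ⊤ volume →
        (∀ t ∈ Ici (0:ℝ), IntegrableOn (fun s => u s * k t s) (Ici 0)) ∧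
          IntegrableOn (fun t => |∫ s in Ici (0:ℝ), u s * k t s|) (Ici 0)) := by
  have hinner : ∀ a ∈ Ici (0:ℝ), ∀ b ∈ Ici (0:ℝ), ⟪K a, K b⟫_ℝ = k a b :=
    fun a ha b hb => (hrep (K a) b hb).trans (hK a ha b hb)
  -- continuity of K
  have hKcont : ContinuousOn K (Ici 0) := by
    intro t₀ ht₀
    have hdiag : ContinuousWithinAt (fun t : ℝ => k t t - 2 * k t t₀ + k t₀ t₀) (Ici 0) t₀ := by
      have h1 : ContinuousWithinAt (fun t : ℝ => k t t) (Ici 0) t₀ := by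
        have := (hcont.comp (f := fun t : ℝ => (t, t))
          (continuous_id.prodMk continuous_id).continuousOn
          (fun t ht => mk_mem_prod ht ht)) t₀ ht₀
        exact this
      have h2 : ContinuousWithinAt (fun t : ℝ => k t t₀) (Ici 0) t₀ := by
        have := (hcont.comp (f := fun t : ℝ => (t, t₀))
          (continuous_id.prodMk continuous_const).continuousOn
          (fun t ht => mk_mem_prod ht ht₀)) t₀ ht₀
        exact this
      exact (h1.sub (continuousWithinAt_const.mul h2)).add continuousWithinAt_const
    have key : ∀ t ∈ Ici (0:ℝ), ‖K t - K t₀‖ = Real.sqrt (k t t - 2 * k t t₀ + k t₀ t₀) := by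
      intro t ht
      have h1 : ‖K t - K t₀‖ ^ 2 = k t t - 2 * k t t₀ + k t₀ t₀ := by
        rw [norm_sub_sq_real, ← real_inner_self_eq_norm_sq, ← real_inner_self_eq_norm_sq,
          hinner t ht t ht, hinner t ht t₀ ht₀, hinner t₀ ht₀ t₀ ht₀]
      rw [← h1, Real.sqrt_sq (norm_nonneg _)]
    have hzero : Real.sqrt (k t₀ t₀ - 2 * k t₀ t₀ + k t₀ t₀) = 0 := by
      rw [show k t₀ t₀ - 2 * k t₀ t₀ + k t₀ t₀ = 0 by ring, Real.sqrt_zero]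
    have hsq : Tendsto (fun t => Real.sqrt (k t t - 2 * k t t₀ + k t₀ t₀)) (nhdsWithin t₀ (Ici 0))
        (nhds 0) := by
      have h2 : Tendsto (fun t => Real.sqrt (k t t - 2 * k t t₀ + k t₀ t₀))
          (nhdsWithin t₀ (Ici 0))
          (nhds (Real.sqrt (k t₀ t₀ - 2 * k t₀ t₀ + k t₀ t₀))) :=
        Real.continuous_sqrt.continuousAt.comp_continuousWithinAt hdiag
      rwa [hzero] at h2
    have hnorm : Tendsto (fun t => ‖K t - K t₀‖) (nhdsWithin t₀ (Ici 0)) (nhds 0) := by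
      apply hsq.congr'
      filter_upwards [self_mem_nhdsWithin] with t ht
      exact (key t ht).symm
    exact tendsto_iff_norm_sub_tendsto_zero.mpr hnorm
  have hιcont : ∀ g : H, ContinuousOn (ι g) (Ici 0) := by
    intro g
    have h1 : ContinuousOn (fun t => ⟪g, K t⟫_ℝ) (Ici 0) :=
      ContinuousOn.inner continuousOn_const hKcont
    exact h1.congr (fun t ht => (hrep g t ht).symm)
  constructor
  · intro hL1
    haveI : Fact ((1:ℝ≥0∞) ≤ 1) := ⟨le_refl _⟩
    -- the inclusion of H into L¹(Ici 0) as a linear map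
    let jlin : H →ₗ[ℝ] (Lp ℝ 1 (volume.restrict (Ici (0:ℝ)))) :=
      { toFun := fun g => (hL1 g).toL1 (ι g)
        map_add' := by
          intro g g'
          rw [← Integrable.toL1_add _ _ (hL1 g) (hL1 g')]
          apply (Integrable.toL1_eq_toL1_iff _ _ _ _).mpr
          rw [map_add]
        map_smul' := by
          intro c g
          rw [RingHom.id_apply, ← Integrable.toL1_smul' _ (hL1 g) c]
          apply (Integrable.toL1_eq_toL1_iff _ _ _ _).mpr
          · rw [_root_.map_smul] }
    have hjcont : Continuous jlin := by
      apply jlin.continuous_of_seq_closed_graph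
      intro seq g f hseq hjf
      have hTIM : TendstoInMeasure (volume.restrict (Ici (0:ℝ)))
          (fun m => ι (seq m)) atTop (f : ℝ → ℝ) := by
        have h1 := tendstoInMeasure_of_tendsto_Lp hjf
        exact h1.congr (fun m => Integrable.coeFn_toL1 (hL1 (seq m))) EventuallyEq.rfl
      obtain ⟨ns, hns, hae⟩ := hTIM.exists_seq_tendsto_ae
      have hae2 : (f : ℝ → ℝ) =ᵐ[volume.restrict (Ici (0:ℝ))] ι g := by
        filter_upwards [hae, ae_restrict_mem measurableSet_Ici] with t h1 h2
        have hg' : Tendsto (fun i => seq (ns i)) atTop (nhds g) :=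
          hseq.comp hns.tendsto_atTop
        have hc : Continuous (fun x : H => ⟪x, K t⟫_ℝ) :=
          Continuous.inner continuous_id continuous_const
        have h3 : Tendsto (fun i => ⟪seq (ns i), K t⟫_ℝ) atTop (nhds (⟪g, K t⟫_ℝ)) :=
          ((hc.tendsto g).comp hg')
        have h4 : Tendsto (fun i => ι (seq (ns i)) t) atTop (nhds (ι g t)) := by
          rw [← hrep g t h2]
          exact h3.congr (fun i => hrep (seq (ns i)) t h2)
        exact tendsto_nhds_unique h1 h4
      exact Lp.ext (hae2.trans (Integrable.coeFn_toL1 (hL1 g)).symm)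
    let jL : H →L[ℝ] (Lp ℝ 1 (volume.restrict (Ici (0:ℝ)))) := ⟨jlin, hjcont⟩
    have hL1norm : ∀ g : H, ∫ t in Ici (0:ℝ), |ι g t| ≤ ‖jL‖ * ‖g‖ := by
      intro g
      have h1 : ‖jL g‖ ≤ ‖jL‖ * ‖g‖ := jL.le_opNorm g
      have h2 : ‖jL g‖ = ∫ t in Ici (0:ℝ), ‖ι g t‖ := by
        rw [L1.norm_eq_integral_norm]
        apply integral_congr_ae
        filter_upwards [Integrable.coeFn_toL1 (hL1 g)] with t ht
        exact congrArg norm ht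
      rw [h2] at h1
      simpa [Real.norm_eq_abs] using h1
    intro u hu
    obtain ⟨M, hM0, hMae⟩ := aux_bound hu
    have hMμ : ∀ᵐ x ∂(volume.restrict (Ici (0:ℝ))), ‖u x‖ ≤ M := by
      filter_upwards [ae_restrict_of_ae hMae] with x hx
      simpa [Real.norm_eq_abs] using hx
    have humeas : AEStronglyMeasurable u (volume.restrict (Ici (0:ℝ))) := hu.1.restrict
    have hmul : ∀ g : H, IntegrableOn (fun t => u t * ι g t) (Ici 0) := fun g =>
      (hL1 g).bdd_mul humeas hMμ
    let φlin : H →ₗ[ℝ] ℝ :=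
      { toFun := fun g => ∫ t in Ici (0:ℝ), u t * ι g t
        map_add' := by
          intro g g'
          have h1 : (fun t => u t * ι (g + g') t) =
              fun t => u t * ι g t + u t * ι g' t := by
            funext t; rw [map_add]; simp only [Pi.add_apply]; ring
          show (∫ t in Ici (0:ℝ), u t * ι (g + g') t) =
            (∫ t in Ici (0:ℝ), u t * ι g t) + ∫ t in Ici (0:ℝ), u t * ι g' t
          rw [h1, integral_add (hmul g) (hmul g')]
        map_smul' := by
          intro c g
          have h1 : (fun t => u t * ι (c • g) t) = fun t => c * (u t * ι g t) := by
            funext t; rw [_root_.map_smul]; simp only [Pi.smul_apply, smul_eq_mul]; ring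
          show (∫ t in Ici (0:ℝ), u t * ι (c • g) t) = c • ∫ t in Ici (0:ℝ), u t * ι g t
          rw [h1, integral_const_mul, smul_eq_mul] }
    have hφbound : ∀ g : H, ‖φlin g‖ ≤ (M * ‖jL‖) * ‖g‖ := by
      intro g
      have h1 : ‖∫ t in Ici (0:ℝ), u t * ι g t‖ ≤ ∫ t in Ici (0:ℝ), M * |ι g t| := by
        apply norm_integral_le_of_norm_le (((hL1 g).abs.const_mul M))
        filter_upwards [hMμ] with t ht
        rw [Real.norm_eq_abs, abs_mul]
        exact mul_le_mul_of_nonneg_right (by simpa [Real.norm_eq_abs] using ht) (abs_nonneg _)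
      have h2 : ∫ t in Ici (0:ℝ), M * |ι g t| = M * ∫ t in Ici (0:ℝ), |ι g t| :=
        integral_const_mul M _
      have h3 := hL1norm g
      calc ‖φlin g‖ ≤ M * ∫ t in Ici (0:ℝ), |ι g t| := by rw [← h2]; exact h1
        _ ≤ M * (‖jL‖ * ‖g‖) := by
            apply mul_le_mul_of_nonneg_left h3 hM0
        _ = (M * ‖jL‖) * ‖g‖ := by ring
    let φ : H →L[ℝ] ℝ := LinearMap.mkContinuous φlin (M * ‖jL‖) hφbound
    set h : H := (InnerProductSpace.toDual ℝ H).symm φ with hh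
    have hkey : ∀ t ∈ Ici (0:ℝ), (∫ s in Ici (0:ℝ), u s * k t s) = ι h t := by
      intro t ht
      have h1 : ι h t = ⟪h, K t⟫_ℝ := (hrep h t ht).symm
      have h2 : ⟪h, K t⟫_ℝ = φ (K t) := InnerProductSpace.toDual_symm_apply
      have h3 : φ (K t) = ∫ s in Ici (0:ℝ), u s * ι (K t) s := rfl
      rw [h1, h2, h3]
      apply setIntegral_congr_fun measurableSet_Ici
      intro s hs
      simp [hK t ht s hs]
    constructor
    · intro t ht
      exact IntegrableOn.congr_fun (hmul (K t))
        (fun s hs => by simp [hK t ht s hs]) measurableSet_Ici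
    · exact IntegrableOn.congr_fun ((hL1 h).abs)
        (fun t ht => by simp only [hkey t ht]) measurableSet_Ici
  · intro hyp g
    haveI hfact1 : Fact ((1:ENNReal) ≤ 1) := ⟨le_refl _⟩
    haveI hfactT : Fact ((1:ENNReal) ≤ ⊤) := ⟨le_top⟩
    have hk1 : ∀ t ∈ Ici (0:ℝ), IntegrableOn (fun s => k t s) (Ici 0) := by
      intro t ht
      have h1 := (hyp (fun _ => (1:ℝ)) (memLp_top_const 1)).1 t ht
      exact IntegrableOn.congr_fun h1 (fun s _ => by simp) measurableSet_Ici
    have hyp' : ∀ v : ℝ → ℝ, MemLp v ⊤ (volume.restrict (Ici (0:ℝ))) →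
        (∀ t ∈ Ici (0:ℝ), IntegrableOn (fun s => v s * k t s) (Ici 0)) ∧
          IntegrableOn (fun t => |∫ s in Ici (0:ℝ), v s * k t s|) (Ici 0) := by
      intro v hv
      obtain ⟨M, hM0, hMae⟩ := aux_bound hv
      have hind : MemLp ((Ici (0:ℝ)).indicator v) ⊤ volume := by
        apply memLp_top_of_bound
          ((aestronglyMeasurable_indicator_iff measurableSet_Ici).mpr hv.1) M
        have h2 : ∀ᵐ x ∂volume, x ∈ Ici (0:ℝ) → |v x| ≤ M :=
          (ae_restrict_iff' measurableSet_Ici).mp hMae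
        filter_upwards [h2] with x hx
        by_cases hmem : x ∈ Ici (0:ℝ)
        · rw [indicator_of_mem hmem]; simpa [Real.norm_eq_abs] using hx hmem
        · rw [indicator_of_notMem hmem]; simpa using hM0
      obtain ⟨h1, h2⟩ := hyp _ hind
      constructor
      · intro t ht
        exact IntegrableOn.congr_fun (h1 t ht)
          (fun s hs => by simp [indicator_of_mem hs]) measurableSet_Ici
      · apply IntegrableOn.congr_fun h2 _ measurableSet_Ici
        intro t _
        have h3 : ∫ s in Ici (0:ℝ), (Ici (0:ℝ)).indicator v s * k t s
            = ∫ s in Ici (0:ℝ), v s * k t s :=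
          setIntegral_congr_fun measurableSet_Ici
            (fun s hs => by simp [indicator_of_mem hs])
        simp only [h3]
    -- measurability of the kernel transform
    have hker : AEStronglyMeasurable (fun p : ℝ × ℝ => k p.1 p.2)
        ((volume.restrict (Ici (0:ℝ))).prod (volume.restrict (Ici (0:ℝ)))) := by
      rw [Measure.prod_restrict]
      exact (hcont.aemeasurable (measurableSet_Ici.prod measurableSet_Ici)).aestronglyMeasurable
    have hTmeas : ∀ v : Lp ℝ ⊤ (volume.restrict (Ici (0:ℝ))),
        AEStronglyMeasurable (fun t => ∫ s in Ici (0:ℝ), (v : ℝ → ℝ) s * k t s)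
          (volume.restrict (Ici (0:ℝ))) := by
      intro v
      have hF : AEStronglyMeasurable (fun p : ℝ × ℝ => (v : ℝ → ℝ) p.2 * k p.1 p.2)
          ((volume.restrict (Ici (0:ℝ))).prod (volume.restrict (Ici (0:ℝ)))) :=
        (Lp.aestronglyMeasurable v).comp_snd.mul hker
      exact hF.integral_prod_right'
    have hTint : ∀ v : Lp ℝ ⊤ (volume.restrict (Ici (0:ℝ))),
        Integrable (fun t => ∫ s in Ici (0:ℝ), (v : ℝ → ℝ) s * k t s)
          (volume.restrict (Ici (0:ℝ))) := by
      intro v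
      have h2 := (hyp' _ (Lp.memLp v)).2
      have h3 : Integrable (fun t => ‖∫ s in Ici (0:ℝ), (v : ℝ → ℝ) s * k t s‖)
          (volume.restrict (Ici (0:ℝ))) := by
        simp only [Real.norm_eq_abs]; exact h2
      exact (integrable_norm_iff (hTmeas v)).mp h3
    -- the operator L∞ → L¹
    let Tlin : Lp ℝ ⊤ (volume.restrict (Ici (0:ℝ))) →ₗ[ℝ] Lp ℝ 1 (volume.restrict (Ici (0:ℝ))) :=
      { toFun := fun v => (hTint v).toL1 _
        map_add' := by
          intro v w
          rw [← Integrable.toL1_add _ _ (hTint v) (hTint w)]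
          apply (Integrable.toL1_eq_toL1_iff _ _ _ _).mpr
          filter_upwards [ae_restrict_mem measurableSet_Ici] with t ht
          have hvw : ⇑(v + w) =ᵐ[volume.restrict (Ici (0:ℝ))] ⇑v + ⇑w := Lp.coeFn_add v w
          have h1 : ∫ s in Ici (0:ℝ), (↑(v + w) : ℝ → ℝ) s * k t s
              = ∫ s in Ici (0:ℝ), ((v : ℝ → ℝ) s + (w : ℝ → ℝ) s) * k t s := by
            apply integral_congr_ae
            filter_upwards [hvw] with s hs
            rw [hs, Pi.add_apply]
          have hvi := (hyp' _ (Lp.memLp v)).1 t ht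
          have hwi := (hyp' _ (Lp.memLp w)).1 t ht
          have h2 : (fun s => ((v : ℝ → ℝ) s + (w : ℝ → ℝ) s) * k t s)
              = fun s => (v : ℝ → ℝ) s * k t s + (w : ℝ → ℝ) s * k t s := by
            funext s; ring
          simp only [Pi.add_apply]
          rw [h1, h2, integral_add hvi hwi]
        map_smul' := by
          intro c v
          rw [RingHom.id_apply, ← Integrable.toL1_smul' _ (hTint v) c]
          apply (Integrable.toL1_eq_toL1_iff _ _ _ _).mpr
          · filter_upwards [ae_restrict_mem measurableSet_Ici] with t ht
            have hcv : ⇑(c • v) =ᵐ[volume.restrict (Ici (0:ℝ))] c • ⇑v := Lp.coeFn_smul c v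
            have h1 : ∫ s in Ici (0:ℝ), (↑(c • v) : ℝ → ℝ) s * k t s
                = ∫ s in Ici (0:ℝ), c * ((v : ℝ → ℝ) s * k t s) := by
              apply integral_congr_ae
              filter_upwards [hcv] with s hs
              rw [hs, Pi.smul_apply, smul_eq_mul]; ring
            simp only [Pi.smul_apply, smul_eq_mul]
            rw [h1, integral_const_mul] }
    have hTcont : Continuous Tlin := by
      apply Tlin.continuous_of_seq_closed_graph
      intro seq v f hseq hTf
      have hpt : ∀ t ∈ Ici (0:ℝ),
          Tendsto (fun m => ∫ s in Ici (0:ℝ), (seq m : ℝ → ℝ) s * k t s) atTop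
            (nhds (∫ s in Ici (0:ℝ), (v : ℝ → ℝ) s * k t s)) := by
        intro t ht
        rw [tendsto_iff_norm_sub_tendsto_zero]
        have hknorm : Integrable (fun s => ‖k t s‖) (volume.restrict (Ici (0:ℝ))) :=
          (hk1 t ht).norm
        have hbound : ∀ m, ‖(∫ s in Ici (0:ℝ), (seq m : ℝ → ℝ) s * k t s)
            - ∫ s in Ici (0:ℝ), (v : ℝ → ℝ) s * k t s‖
            ≤ ‖seq m - v‖ * ∫ s in Ici (0:ℝ), ‖k t s‖ := by
          intro m
          have him := (hyp' _ (Lp.memLp (seq m))).1 t ht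
          have hiv := (hyp' _ (Lp.memLp v)).1 t ht
          rw [← integral_sub him hiv]
          have hae : ∀ᵐ s ∂(volume.restrict (Ici (0:ℝ))),
              ‖(seq m : ℝ → ℝ) s * k t s - (v : ℝ → ℝ) s * k t s‖
                ≤ ‖seq m - v‖ * ‖k t s‖ := by
            have h1 : ∀ᵐ s ∂(volume.restrict (Ici (0:ℝ))),
                (‖(⇑(seq m - v)) s‖₊ : ENNReal)
                  ≤ eLpNormEssSup (⇑(seq m - v)) (volume.restrict (Ici (0:ℝ))) :=
              ae_le_eLpNormEssSup
            have h2 : ⇑(seq m - v) =ᵐ[volume.restrict (Ici (0:ℝ))] ⇑(seq m) - ⇑v :=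
              Lp.coeFn_sub _ _
            filter_upwards [h1, h2] with s hs1 hs2
            have h4 : (‖(⇑(seq m - v)) s‖₊ : ENNReal)
                ≤ eLpNorm (⇑(seq m - v)) ⊤ (volume.restrict (Ici (0:ℝ))) := by
              rw [eLpNorm_exponent_top]; exact hs1
            have h5 := ENNReal.toReal_mono (Lp.eLpNorm_ne_top (seq m - v)) h4
            have h3 : ‖(seq m : ℝ → ℝ) s - (v : ℝ → ℝ) s‖ ≤ ‖seq m - v‖ := by
              rw [Lp.norm_def]
              calc ‖(seq m : ℝ → ℝ) s - (v : ℝ → ℝ) s‖ = ‖(⇑(seq m - v)) s‖ := by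
                    rw [hs2, Pi.sub_apply]
                _ ≤ _ := by simpa using h5
            calc ‖(seq m : ℝ → ℝ) s * k t s - (v : ℝ → ℝ) s * k t s‖
                = ‖(seq m : ℝ → ℝ) s - (v : ℝ → ℝ) s‖ * ‖k t s‖ := by
                  rw [← sub_mul, norm_mul]
              _ ≤ ‖seq m - v‖ * ‖k t s‖ :=
                  mul_le_mul_of_nonneg_right h3 (norm_nonneg _)
          calc ‖∫ s in Ici (0:ℝ),
              ((seq m : ℝ → ℝ) s * k t s - (v : ℝ → ℝ) s * k t s)‖
              ≤ ∫ s in Ici (0:ℝ), ‖seq m - v‖ * ‖k t s‖ :=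
                norm_integral_le_of_norm_le (hknorm.const_mul _) hae
            _ = ‖seq m - v‖ * ∫ s in Ici (0:ℝ), ‖k t s‖ := integral_const_mul _ _
        have hzero : Tendsto (fun m => ‖seq m - v‖ * ∫ s in Ici (0:ℝ), ‖k t s‖)
            atTop (nhds 0) := by
          have h1 : Tendsto (fun m => ‖seq m - v‖) atTop (nhds 0) :=
            tendsto_iff_norm_sub_tendsto_zero.mp hseq
          simpa using h1.mul_const _
        exact squeeze_zero (fun m => norm_nonneg _) hbound hzero
      have hTIM : TendstoInMeasure (volume.restrict (Ici (0:ℝ)))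
          (fun m => fun t => ∫ s in Ici (0:ℝ), (seq m : ℝ → ℝ) s * k t s) atTop
          (f : ℝ → ℝ) := by
        have h1 := tendstoInMeasure_of_tendsto_Lp hTf
        exact h1.congr (fun m => Integrable.coeFn_toL1 (hTint (seq m))) EventuallyEq.rfl
      obtain ⟨ns, hns, hae⟩ := hTIM.exists_seq_tendsto_ae
      have hfeq : (f : ℝ → ℝ) =ᵐ[volume.restrict (Ici (0:ℝ))]
          fun t => ∫ s in Ici (0:ℝ), (v : ℝ → ℝ) s * k t s := by
        filter_upwards [hae, ae_restrict_mem measurableSet_Ici] with t h1 h2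
        exact tendsto_nhds_unique h1 ((hpt t h2).comp hns.tendsto_atTop)
      exact Lp.ext (hfeq.trans (Integrable.coeFn_toL1 (hTint v)).symm)
    let TL : Lp ℝ ⊤ (volume.restrict (Ici (0:ℝ))) →L[ℝ] Lp ℝ 1 (volume.restrict (Ici (0:ℝ))) :=
      ⟨Tlin, hTcont⟩
    have hsgn_meas : ∀ n : ℕ, AEStronglyMeasurable (fun t => Real.sign (ι g t))
        (volume.restrict (Icc (0:ℝ) (n:ℝ))) := by
      intro n
      have h1 : AEMeasurable (ι g) (volume.restrict (Icc (0:ℝ) (n:ℝ))) :=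
        ((hιcont g).mono Icc_subset_Ici_self).aemeasurable measurableSet_Icc
      exact (aux_sign_meas.comp_aemeasurable h1).aestronglyMeasurable
    have key : ∀ n : ℕ, ∫ t in Icc (0:ℝ) (n:ℝ), |ι g t| ≤ ‖g‖ * Real.sqrt ‖TL‖ := by
      intro n
      set un : ℝ → ℝ := (Icc (0:ℝ) (n:ℝ)).indicator (fun t => Real.sign (ι g t)) with hun
      have hunb : ∀ t, |un t| ≤ 1 := by
        intro t
        rw [hun]
        by_cases ht : t ∈ Icc (0:ℝ) (n:ℝ)
        · rw [indicator_of_mem ht]; exact aux_sign_le _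
        · rw [indicator_of_notMem ht]; norm_num
      have hun_mem : MemLp un ⊤ (volume.restrict (Ici (0:ℝ))) := by
        apply MemLp.restrict
        apply memLp_top_of_bound
          ((aestronglyMeasurable_indicator_iff measurableSet_Icc).mpr (hsgn_meas n)) 1
        exact Eventually.of_forall (fun t => by simpa [Real.norm_eq_abs] using hunb t)
      set U : Lp ℝ ⊤ (volume.restrict (Ici (0:ℝ))) := hun_mem.toLp un with hU
      have hUcoe : (U : ℝ → ℝ) =ᵐ[volume.restrict (Ici (0:ℝ))] un := hun_mem.coeFn_toLp
      have hUnorm : ‖U‖ ≤ 1 := by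
        rw [hU, Lp.norm_toLp]
        have h1 : eLpNorm un ⊤ (volume.restrict (Ici (0:ℝ))) ≤ ENNReal.ofReal 1 := by
          rw [eLpNorm_exponent_top]
          exact eLpNormEssSup_le_of_ae_bound
            (Eventually.of_forall (fun t => by simpa [Real.norm_eq_abs] using hunb t))
        have h2 := ENNReal.toReal_mono (by simp) h1
        simpa using h2
      have hKint : Integrable (fun s => un s • K s) (volume.restrict (Icc (0:ℝ) (n:ℝ))) := by
        have hKmeas : AEStronglyMeasurable K (volume.restrict (Icc (0:ℝ) (n:ℝ))) :=
          (hKcont.mono Icc_subset_Ici_self).aestronglyMeasurable measurableSet_Icc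
        have humeas : AEStronglyMeasurable un (volume.restrict (Icc (0:ℝ) (n:ℝ))) :=
          ((aestronglyMeasurable_indicator_iff measurableSet_Icc).mpr (hsgn_meas n)).restrict
        obtain ⟨B, hB⟩ := (isCompact_Icc (a := (0:ℝ)) (b := (n:ℝ))).exists_bound_of_continuousOn
          (hKcont.mono Icc_subset_Ici_self)
        apply Integrable.mono' (integrable_const (max B 0))
        · exact humeas.smul hKmeas
        · filter_upwards [ae_restrict_mem measurableSet_Icc] with s hs
          rw [norm_smul]
          calc ‖un s‖ * ‖K s‖ ≤ 1 * max B 0 := by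
                apply mul_le_mul (by simpa [Real.norm_eq_abs] using hunb s)
                  ((hB s hs).trans (le_max_left _ _)) (norm_nonneg _) zero_le_one
            _ = max B 0 := one_mul _
      set hn : H := ∫ s in Icc (0:ℝ) (n:ℝ), un s • K s with hhn
      have hinnerhn : ∀ g' : H, ⟪g', hn⟫_ℝ = ∫ s in Icc (0:ℝ) (n:ℝ), un s * ι g' s := by
        intro g'
        have h2 : ⟪g', hn⟫_ℝ = ∫ s in Icc (0:ℝ) (n:ℝ), ⟪g', un s • K s⟫_ℝ := by
          rw [hhn]
          exact ((innerSL ℝ g').integral_comp_comm hKint).symm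
        rw [h2]
        apply setIntegral_congr_fun measurableSet_Icc
        intro s hs
        show ⟪g', un s • K s⟫_ℝ = un s * ι g' s
        rw [real_inner_smul_right, hrep g' s (Icc_subset_Ici_self hs)]
      have hιhn : ∀ t ∈ Ici (0:ℝ), ι hn t = ∫ s in Ici (0:ℝ), un s * k t s := by
        intro t ht
        have h1 : ι hn t = ⟪K t, hn⟫_ℝ := by
          rw [← hrep hn t ht, real_inner_comm]
        rw [h1, hinnerhn (K t)]
        have h2 : ∫ s in Icc (0:ℝ) (n:ℝ), un s * ι (K t) s
            = ∫ s in Icc (0:ℝ) (n:ℝ), Real.sign (ι g s) * k t s := by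
          apply setIntegral_congr_fun measurableSet_Icc
          intro s hs
          rw [hun]
          simp [indicator_of_mem hs, hK t ht s (Icc_subset_Ici_self hs)]
        have h3 : ∫ s in Ici (0:ℝ), un s * k t s
            = ∫ s in Icc (0:ℝ) (n:ℝ), Real.sign (ι g s) * k t s := by
          have h4 : (fun s => un s * k t s)
              = (Icc (0:ℝ) (n:ℝ)).indicator (fun s => Real.sign (ι g s) * k t s) := by
            funext s
            rw [hun]
            by_cases hs : s ∈ Icc (0:ℝ) (n:ℝ)
            · rw [indicator_of_mem hs, indicator_of_mem hs]
            · rw [indicator_of_notMem hs, indicator_of_notMem hs, zero_mul]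
          rw [h4, setIntegral_indicator measurableSet_Icc,
            inter_eq_self_of_subset_right Icc_subset_Ici_self]
        rw [h2, h3]
      have hιhncont : ContinuousOn (ι hn) (Ici 0) := hιcont hn
      have hint_icc : IntegrableOn (ι hn) (Icc (0:ℝ) (n:ℝ)) :=
        (hιhncont.mono Icc_subset_Ici_self).integrableOn_Icc
      have humeas2 : AEStronglyMeasurable un (volume.restrict (Icc (0:ℝ) (n:ℝ))) :=
        ((aestronglyMeasurable_indicator_iff measurableSet_Icc).mpr (hsgn_meas n)).restrict
      have hb1 : ‖hn‖^2 = ∫ s in Icc (0:ℝ) (n:ℝ), un s * ι hn s := by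
        rw [← real_inner_self_eq_norm_sq, hinnerhn hn]
      have hmuli : IntegrableOn (fun s => un s * ι hn s) (Icc (0:ℝ) (n:ℝ)) :=
        hint_icc.bdd_mul humeas2 (Eventually.of_forall (fun s => by
          simpa [Real.norm_eq_abs] using hunb s))
      have hb2 : ∫ s in Icc (0:ℝ) (n:ℝ), un s * ι hn s
          ≤ ∫ s in Icc (0:ℝ) (n:ℝ), |ι hn s| := by
        apply integral_mono hmuli hint_icc.abs
        intro s
        calc un s * ι hn s ≤ |un s * ι hn s| := le_abs_self _
          _ = |un s| * |ι hn s| := abs_mul _ _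
          _ ≤ 1 * |ι hn s| := mul_le_mul_of_nonneg_right (hunb s) (abs_nonneg _)
          _ = |ι hn s| := one_mul _
      have hTUeq : ∀ t, ∫ s in Ici (0:ℝ), (U : ℝ → ℝ) s * k t s
          = ∫ s in Ici (0:ℝ), un s * k t s := by
        intro t
        apply integral_congr_ae
        filter_upwards [hUcoe] with s hs
        rw [hs]
      have hIabs : IntegrableOn (fun t => |ι hn t|) (Ici (0:ℝ)) := by
        apply IntegrableOn.congr_fun ((hTint U).abs) _ measurableSet_Ici
        intro t ht
        simp only []
        rw [hTUeq t, ← hιhn t ht]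
      have hb3 : ∫ s in Icc (0:ℝ) (n:ℝ), |ι hn s| ≤ ∫ t in Ici (0:ℝ), |ι hn t| := by
        apply setIntegral_mono_set hIabs
        · exact Eventually.of_forall (fun s => abs_nonneg _)
        · exact HasSubset.Subset.eventuallyLE Icc_subset_Ici_self
      have hb4 : ∫ t in Ici (0:ℝ), |ι hn t| ≤ ‖TL‖ := by
        have h1 : ‖TL U‖ = ∫ t in Ici (0:ℝ),
            ‖∫ s in Ici (0:ℝ), (U : ℝ → ℝ) s * k t s‖ := by
          rw [L1.norm_eq_integral_norm]
          apply integral_congr_ae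
          filter_upwards [Integrable.coeFn_toL1 (hTint U)] with t ht
          exact congrArg norm ht
        have h2 : ∫ t in Ici (0:ℝ), |ι hn t| = ‖TL U‖ := by
          rw [h1]
          apply setIntegral_congr_fun measurableSet_Ici
          intro t ht
          simp only [Real.norm_eq_abs]
          rw [hTUeq t, ← hιhn t ht]
        rw [h2]
        calc ‖TL U‖ ≤ ‖TL‖ * ‖U‖ := TL.le_opNorm U
          _ ≤ ‖TL‖ * 1 := mul_le_mul_of_nonneg_left hUnorm (norm_nonneg _)
          _ = ‖TL‖ := mul_one _
      have hbn : ‖hn‖ ≤ Real.sqrt ‖TL‖ := by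
        rw [← Real.sqrt_sq (norm_nonneg hn)]
        apply Real.sqrt_le_sqrt
        calc ‖hn‖^2 = _ := hb1
          _ ≤ _ := hb2
          _ ≤ _ := hb3
          _ ≤ ‖TL‖ := hb4
      have hfin : ∫ t in Icc (0:ℝ) (n:ℝ), |ι g t| = ⟪g, hn⟫_ℝ := by
        rw [hinnerhn g]
        apply setIntegral_congr_fun measurableSet_Icc
        intro s hs
        rw [hun]
        simp only [indicator_of_mem hs]
        exact (aux_sign_mul (ι g s)).symm
      calc ∫ t in Icc (0:ℝ) (n:ℝ), |ι g t| = ⟪g, hn⟫_ℝ := hfin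
        _ ≤ ‖g‖ * ‖hn‖ := real_inner_le_norm _ _
        _ ≤ ‖g‖ * Real.sqrt ‖TL‖ := mul_le_mul_of_nonneg_left hbn (norm_nonneg _)
    refine ⟨(hιcont g).aestronglyMeasurable measurableSet_Ici, ?_⟩
    have hci : ∀ n : ℕ, IntegrableOn (ι g) (Icc (0:ℝ) (n:ℝ)) := fun n =>
      ((hιcont g).mono Icc_subset_Ici_self).integrableOn_Icc
    have hlin : ∀ n : ℕ, ∫⁻ t in Icc (0:ℝ) (n:ℝ), ‖ι g t‖₊ ∂volume
        ≤ ENNReal.ofReal (‖g‖ * Real.sqrt ‖TL‖) := by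
      intro n
      simp only [← enorm_eq_nnnorm]; rw [← ofReal_integral_norm_eq_lintegral_enorm (hci n)]
      apply ENNReal.ofReal_le_ofReal
      calc ∫ t in Icc (0:ℝ) (n:ℝ), ‖ι g t‖ = ∫ t in Icc (0:ℝ) (n:ℝ), |ι g t| := by
            simp [Real.norm_eq_abs]
        _ ≤ _ := key n
    have hmono : ∫⁻ t in Ici (0:ℝ), (‖ι g t‖₊ : ENNReal) ∂volume
        ≤ ENNReal.ofReal (‖g‖ * Real.sqrt ‖TL‖) := by
      rw [← lintegral_indicator measurableSet_Ici]
      have hpt : ∀ t, (Ici (0:ℝ)).indicator (fun t => (‖ι g t‖₊ : ENNReal)) t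
          = ⨆ m : ℕ, (Icc (0:ℝ) (m:ℝ)).indicator (fun t => (‖ι g t‖₊ : ENNReal)) t := by
        intro t
        by_cases ht : t ∈ Ici (0:ℝ)
        · rw [indicator_of_mem ht]
          obtain ⟨m, hm⟩ := exists_nat_ge t
          apply le_antisymm
          · exact le_iSup_of_le m (le_of_eq (indicator_of_mem (mem_Icc.mpr ⟨ht, hm⟩) (fun t => (‖ι g t‖₊ : ENNReal))).symm)
          · exact iSup_le (fun m => indicator_le_self _ _ t)
        · have h1 : ∀ m : ℕ, t ∉ Icc (0:ℝ) (m:ℝ) := fun m hc => ht (Icc_subset_Ici_self hc)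
          rw [indicator_of_notMem ht]
          simp [indicator_of_notMem (h1 _)]
      rw [lintegral_congr hpt]
      have hmeas : ∀ m : ℕ, AEMeasurable
          ((Icc (0:ℝ) (m:ℝ)).indicator (fun t => (‖ι g t‖₊ : ENNReal))) volume := by
        intro m
        rw [aemeasurable_indicator_iff measurableSet_Icc]
        exact (((hιcont g).mono Icc_subset_Ici_self).aemeasurable measurableSet_Icc).nnnorm.coe_nnreal_ennreal
      have hmono2 : ∀ᵐ t ∂volume, Monotone fun m : ℕ =>
          (Icc (0:ℝ) (m:ℝ)).indicator (fun t => (‖ι g t‖₊ : ENNReal)) t := by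
        apply Eventually.of_forall
        intro t m m' hmm'
        exact indicator_le_indicator_of_subset
          (Icc_subset_Icc le_rfl (Nat.cast_le.mpr hmm')) (fun _ => zero_le) t
      rw [lintegral_iSup' hmeas hmono2]
      apply iSup_le
      intro m
      rw [lintegral_indicator measurableSet_Icc]
      exact hlin m
    exact lt_of_le_of_lt hmono ENNReal.ofReal_lt_top
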